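/- arXiv:1506.03674 — 2 statements merged into one kernel-verified Lean document; each statement's English description precedes it below -/
import Mathlib

section
/- Let 1 < p < 2 and 0 < B < p−1 be real numbers, Ω ⊆ ℝ^N open, I ⊆ ℝ an open interval, and let u : I × Ω → ℝ be everywhere positive, with continuous time derivative ∂_t u, twice continuously differentiable in the space variable, and with nonvanishing spatial gradient ∇u. Suppose u satisfies ∂_t u − Δ_p u + B|∇u|^p/u = 0 at every point of I × Ω. Set γ = (p−1−B)/(p−1), β = (2−p)B/(p−1−B), and w = (1/γ)·u^γ, i.e. w = ((p−1)/(p−1−B))·u^{(p−1−B)/(p−1)}. Then w satisfies γ^β · w^β · ∂_t w − Δ_p w = 0 at every point of I × Ω. -/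
open InnerProductSpace

/-- The `p`-Laplacian `Δ_p f(x) = div(|∇f|^{p−2}∇f)(x) = ∑ᵢ ∂ᵢ(|∇f|^{p−2} ∂ᵢf)(x)`
of a function `f : ℝ^N → ℝ`. -/
noncomputable def pLaplacian {N : ℕ} (p : ℝ) (f : EuclideanSpace ℝ (Fin N) → ℝ)
    (x : EuclideanSpace ℝ (Fin N)) : ℝ :=
  ∑ i : Fin N,
    fderiv ℝ
      (fun y => ‖gradient f y‖ ^ (p - 2) * fderiv ℝ f y (EuclideanSpace.single i (1 : ℝ)))
      x (EuclideanSpace.single i (1 : ℝ))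

private lemma fderiv_eq_inner_gradient {N : ℕ} (f : EuclideanSpace ℝ (Fin N) → ℝ)
    (y v : EuclideanSpace ℝ (Fin N)) : fderiv ℝ f y v = ⟪gradient f y, v⟫_ℝ := by
  rw [gradient, toDual_symm_apply]

/-- **Change of variable for the finite-time extinction argument.**
Let `1 < p < 2`, `0 < B < p−1`, and let `u > 0` on `I × Ω` solve
`∂ₜu − Δ_p u + B|∇u|^p/u = 0` there, with continuous time derivative, twice
continuously differentiable in space, and with nonvanishing spatial gradient.
With `γ = (p−1−B)/(p−1)`, `β = (2−p)B/(p−1−B)` and `w = (1/γ)·u^γ`, the function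
`w` satisfies `γ^β · w^β · ∂ₜw − Δ_p w = 0` on `I × Ω`. -/
theorem stmt5 {N : ℕ} (p B : ℝ) (hp1 : 1 < p) (hp2 : p < 2) (hB0 : 0 < B)
    (hB : B < p - 1)
    (γ β : ℝ) (hγ : γ = (p - 1 - B) / (p - 1)) (hβ : β = (2 - p) * B / (p - 1 - B))
    (Ω : Set (EuclideanSpace ℝ (Fin N))) (hΩ : IsOpen Ω)
    (I : Set ℝ) (hI : ∃ a b : ℝ, I = Set.Ioo a b)
    (u : ℝ → EuclideanSpace ℝ (Fin N) → ℝ)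
    (hpos : ∀ t ∈ I, ∀ x ∈ Ω, 0 < u t x)
    (hspace : ∀ t ∈ I, ContDiffOn ℝ 2 (u t) Ω)
    (hgrad : ∀ t ∈ I, ∀ x ∈ Ω, gradient (u t) x ≠ 0)
    (htime : ∀ x ∈ Ω, ∀ t ∈ I, DifferentiableAt ℝ (fun s => u s x) t)
    (htcont : ContinuousOn
      (fun q : ℝ × EuclideanSpace ℝ (Fin N) => deriv (fun s => u s q.2) q.1) (I ×ˢ Ω))
    (hpde : ∀ t ∈ I, ∀ x ∈ Ω,
      deriv (fun s => u s x) t - pLaplacian p (u t) x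
        + B * ‖gradient (u t) x‖ ^ p / u t x = 0) :
    ∀ t ∈ I, ∀ x ∈ Ω,
      γ ^ β * ((1 / γ) * u t x ^ γ) ^ β * deriv (fun s => (1 / γ) * u s x ^ γ) t
        - pLaplacian p (fun y => (1 / γ) * u t y ^ γ) x = 0 := by
  intro t ht x hx
  -- arithmetic preliminaries
  have hp1' : (0:ℝ) < p - 1 := by linarith
  have hpB : (0:ℝ) < p - 1 - B := by linarith
  have hγpos : 0 < γ := by rw [hγ]; exact div_pos hpB hp1'
  have hγne : γ ≠ 0 := hγpos.ne'
  have hexp : (γ - 1) * (p - 1) = -B := by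
    rw [hγ]; field_simp; ring
  have hsum : γ * β + (γ - 1) = -B := by
    rw [hγ, hβ]; field_simp; ring
  -- notation
  set e : Fin N → EuclideanSpace ℝ (Fin N) := fun i => EuclideanSpace.single i (1:ℝ) with he
  set f : EuclideanSpace ℝ (Fin N) → ℝ := u t with hfdef
  set w : EuclideanSpace ℝ (Fin N) → ℝ := fun y => (1 / γ) * f y ^ γ with hwdef
  have hux : ∀ y ∈ Ω, 0 < f y := hpos t ht
  have hx0 : 0 < f x := hux x hx
  have hcd : ∀ y ∈ Ω, ContDiffAt ℝ 2 f y := fun y hy => (hspace t ht).contDiffAt (hΩ.mem_nhds hy)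
  have hdf : ∀ y ∈ Ω, DifferentiableAt ℝ f y :=
    fun y hy => (hcd y hy).differentiableAt (by norm_num)
  have hgx : gradient f x ≠ 0 := hgrad t ht x hx
  -- derivative of w on Ω
  have hwd : ∀ y ∈ Ω, HasFDerivAt w (f y ^ (γ - 1) • fderiv ℝ f y) y := by
    intro y hy
    have h1 : HasFDerivAt f (fderiv ℝ f y) y := (hdf y hy).hasFDerivAt
    have h2 := (h1.rpow_const (p := γ) (Or.inl (hux y hy).ne')).const_mul (1 / γ)
    refine h2.congr_fderiv ?_
    rw [smul_smul]
    congr 1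
    field_simp
  have hfderivw : ∀ y ∈ Ω, fderiv ℝ w y = f y ^ (γ - 1) • fderiv ℝ f y :=
    fun y hy => (hwd y hy).fderiv
  have hgradw : ∀ y ∈ Ω, gradient w y = f y ^ (γ - 1) • gradient f y := by
    intro y hy
    rw [gradient, gradient, hfderivw y hy, map_smul]
  have hnormw : ∀ y ∈ Ω, ‖gradient w y‖ = f y ^ (γ - 1) * ‖gradient f y‖ := by
    intro y hy
    rw [hgradw y hy, norm_smul, Real.norm_eq_abs,
      abs_of_pos (Real.rpow_pos_of_pos (hux y hy) _)]
  -- key pointwise identity on Ω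
  have hkey : ∀ i : Fin N, ∀ y ∈ Ω,
      ‖gradient w y‖ ^ (p - 2) * fderiv ℝ w y (e i)
        = f y ^ (-B) * (‖gradient f y‖ ^ (p - 2) * fderiv ℝ f y (e i)) := by
    intro i y hy
    have h0 := hux y hy
    have e1 : (f y ^ (γ - 1) * ‖gradient f y‖) ^ (p - 2)
        = f y ^ ((γ - 1) * (p - 2)) * ‖gradient f y‖ ^ (p - 2) := by
      rw [Real.mul_rpow (Real.rpow_nonneg h0.le _) (norm_nonneg _), ← Real.rpow_mul h0.le]
    have e2 : f y ^ ((γ - 1) * (p - 2)) * f y ^ (γ - 1) = f y ^ (-B) := by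
      rw [← Real.rpow_add h0,
        show (γ - 1) * (p - 2) + (γ - 1) = (γ - 1) * (p - 1) by ring, hexp]
    rw [hnormw y hy, hfderivw y hy, ContinuousLinearMap.smul_apply, smul_eq_mul, e1]
    calc f y ^ ((γ - 1) * (p - 2)) * ‖gradient f y‖ ^ (p - 2)
          * (f y ^ (γ - 1) * fderiv ℝ f y (e i))
        = (f y ^ ((γ - 1) * (p - 2)) * f y ^ (γ - 1))
          * (‖gradient f y‖ ^ (p - 2) * fderiv ℝ f y (e i)) := by ring
      _ = f y ^ (-B) * (‖gradient f y‖ ^ (p - 2) * fderiv ℝ f y (e i)) := by rw [e2]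
  -- differentiability at x of the ingredients
  have hfd' : DifferentiableAt ℝ (fderiv ℝ f) x :=
    ((hcd x hx).fderiv_right (m := 1) (by norm_num)).differentiableAt one_ne_zero
  have hgradd : DifferentiableAt ℝ (fun y => gradient f y) x := by
    exact ((toDual ℝ (EuclideanSpace ℝ (Fin N))).symm.toContinuousLinearEquiv.toContinuousLinearMap.differentiable.differentiableAt).comp x hfd'
  have hnormd : DifferentiableAt ℝ (fun y => ‖gradient f y‖ ^ (p - 2)) x :=
    (hgradd.norm ℝ hgx).rpow_const (Or.inl (norm_ne_zero_iff.2 hgx))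
  have happ : ∀ i : Fin N, DifferentiableAt ℝ (fun y => fderiv ℝ f y (e i)) x :=
    fun i => hfd'.clm_apply (differentiableAt_const _)
  have hH : ∀ i : Fin N,
      DifferentiableAt ℝ (fun y => ‖gradient f y‖ ^ (p - 2) * fderiv ℝ f y (e i)) x :=
    fun i => hnormd.mul (happ i)
  have hP : HasFDerivAt (fun y => f y ^ (-B)) ((-B * f x ^ (-B - 1)) • fderiv ℝ f x) x :=
    (hdf x hx).hasFDerivAt.rpow_const (Or.inl hx0.ne')
  -- compute the p-Laplacian of w at x
  have hGi : ∀ i : Fin N,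
      fderiv ℝ (fun y => ‖gradient w y‖ ^ (p - 2) * fderiv ℝ w y (e i)) x (e i)
        = f x ^ (-B)
            * fderiv ℝ (fun y => ‖gradient f y‖ ^ (p - 2) * fderiv ℝ f y (e i)) x (e i)
          + (‖gradient f x‖ ^ (p - 2) * fderiv ℝ f x (e i))
            * (-B * f x ^ (-B - 1) * fderiv ℝ f x (e i)) := by
    intro i
    have heq : (fun y => ‖gradient w y‖ ^ (p - 2) * fderiv ℝ w y (e i))
        =ᶠ[nhds x] fun y => f y ^ (-B)
          * (‖gradient f y‖ ^ (p - 2) * fderiv ℝ f y (e i)) := by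
      filter_upwards [hΩ.mem_nhds hx] with y hy using hkey i y hy
    rw [heq.fderiv_eq, (show HasFDerivAt (fun y => f y ^ (-B) * (‖gradient f y‖ ^ (p - 2) * fderiv ℝ f y (e i))) _ x from hP.mul (hH i).hasFDerivAt).fderiv]
    simp only [ContinuousLinearMap.add_apply, ContinuousLinearMap.smul_apply, smul_eq_mul]
    try ring
  have hsq : ∑ i : Fin N, fderiv ℝ f x (e i) ^ 2 = ‖gradient f x‖ ^ 2 := by
    have h1 : ∀ i : Fin N, fderiv ℝ f x (e i) = gradient f x i := by
      intro i
      rw [fderiv_eq_inner_gradient, he, real_inner_comm, EuclideanSpace.inner_single_left]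
      simp
    simp_rw [h1]
    rw [← real_inner_self_eq_norm_sq]
    simp [PiLp.inner_apply, RCLike.inner_apply, sq]
    rw [EuclideanSpace.norm_eq, Real.mul_self_sqrt (by positivity)]
    simp [sq, abs_mul_abs_self]
  have hnp : ‖gradient f x‖ ^ (p - 2) * ‖gradient f x‖ ^ 2 = ‖gradient f x‖ ^ p := by
    have h2 : ‖gradient f x‖ ^ (2:ℕ) = ‖gradient f x‖ ^ ((2:ℕ):ℝ) :=
      (Real.rpow_natCast _ 2).symm
    rw [h2, ← Real.rpow_add (norm_pos_iff.2 hgx)]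
    norm_num
  have hplw : pLaplacian p w x
      = f x ^ (-B) * pLaplacian p f x - B * f x ^ (-B - 1) * ‖gradient f x‖ ^ p := by
    unfold pLaplacian
    rw [Finset.sum_congr rfl fun i _ => hGi i, Finset.sum_add_distrib,
      ← Finset.mul_sum]
    congr 1
    have : ∑ i : Fin N, (‖gradient f x‖ ^ (p - 2) * fderiv ℝ f x (e i))
        * (-B * f x ^ (-B - 1) * fderiv ℝ f x (e i))
        = -(B * f x ^ (-B - 1)) * (‖gradient f x‖ ^ (p - 2)
          * ∑ i : Fin N, fderiv ℝ f x (e i) ^ 2) := by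
      rw [Finset.mul_sum, Finset.mul_sum]
      refine Finset.sum_congr rfl fun i _ => by ring
    rw [this, hsq, hnp]
    ring
  -- time derivative
  have hdt : deriv (fun s => (1 / γ) * u s x ^ γ) t
      = f x ^ (γ - 1) * deriv (fun s => u s x) t := by
    have h1 : HasDerivAt (fun s => u s x) (deriv (fun s => u s x) t) t :=
      (htime x hx t ht).hasDerivAt
    have h2 := HasDerivAt.const_mul (1 / γ)
      (h1.rpow_const (p := γ) (Or.inl (hpos t ht x hx).ne'))
    rw [h2.deriv]
    rw [hfdef]
    field_simp
  -- the coefficient in front of the time derivative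
  have hcoef : γ ^ β * ((1 / γ) * f x ^ γ) ^ β = f x ^ (γ * β) := by
    rw [← Real.mul_rpow hγpos.le (by positivity)]
    rw [show γ * ((1 / γ) * f x ^ γ) = f x ^ γ by field_simp]
    rw [← Real.rpow_mul hx0.le]
  -- assemble
  have hgoalL : γ ^ β * ((1 / γ) * u t x ^ γ) ^ β * deriv (fun s => (1 / γ) * u s x ^ γ) t
      = f x ^ (-B) * deriv (fun s => u s x) t := by
    rw [hdt]
    have : γ ^ β * ((1 / γ) * u t x ^ γ) ^ β = f x ^ (γ * β) := hcoef
    rw [this, ← mul_assoc, ← Real.rpow_add hx0, hsum]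
  have hpde' := hpde t ht x hx
  have hBm : f x ^ (-B - 1) = f x ^ (-B) / f x := by
    rw [show -B - 1 = -B + (-1) by ring, Real.rpow_add hx0, Real.rpow_neg_one]
    ring
  rw [hgoalL]
  have : pLaplacian p (fun y => (1 / γ) * u t y ^ γ) x = pLaplacian p w x := rfl
  rw [this, hplw, hBm]
  have hd : deriv (fun s => u s x) t
      = pLaplacian p f x - B * ‖gradient f x‖ ^ p / f x := by linarith [hpde']
  rw [hd]
  field_simp
  ring
end

section
/- Let p > 1 and 0 < B < p−1 be real numbers, and set γ = (p−1−B)/(p−1) ∈ (0,1). Let Ω ⊆ ℝ^N be open and let v : Ω → ℝ be everywhere positive, twice continuously differentiable, with nonvanishing gradient, satisfying −Δ_p v = γ^{p−1}·v^{((γ−1)(p−1)+1)/γ} at every point of Ω. Then the function φ = v^{1/γ} satisfies −Δ_p φ + B|∇φ|^p/φ = φ at every point of Ω. -/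
open InnerProductSpace


/-- **Elliptic change of unknown.**
Let `p > 1`, `0 < B < p−1`, `γ = (p−1−B)/(p−1) ∈ (0,1)`. If `v > 0` is twice
continuously differentiable on the open set `Ω`, with nonvanishing gradient,
and satisfies `−Δ_p v = γ^{p−1} v^{((γ−1)(p−1)+1)/γ}` on `Ω`, then
`φ = v^{1/γ}` satisfies `−Δ_p φ + B|∇φ|^p/φ = φ` on `Ω`. -/
theorem stmt7 {N : ℕ} (p B : ℝ) (hp : 1 < p) (hB0 : 0 < B) (hB : B < p - 1)
    (γ : ℝ) (hγ : γ = (p - 1 - B) / (p - 1))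
    (Ω : Set (EuclideanSpace ℝ (Fin N))) (hΩ : IsOpen Ω)
    (v : EuclideanSpace ℝ (Fin N) → ℝ)
    (hpos : ∀ x ∈ Ω, 0 < v x)
    (hreg : ContDiffOn ℝ 2 v Ω)
    (hgrad : ∀ x ∈ Ω, gradient v x ≠ 0)
    (hpde : ∀ x ∈ Ω,
      -pLaplacian p v x = γ ^ (p - 1) * v x ^ (((γ - 1) * (p - 1) + 1) / γ)) :
    ∀ x ∈ Ω,
      -pLaplacian p (fun y => v y ^ (1 / γ)) x
        + B * ‖gradient (fun y => v y ^ (1 / γ)) x‖ ^ p / v x ^ (1 / γ)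
        = v x ^ (1 / γ) := by
  intro x hx
  have hp1 : (0:ℝ) < p - 1 := by linarith
  have hγ0 : 0 < γ := by rw [hγ]; exact div_pos (by linarith) hp1
  have hγ1 : γ < 1 := by rw [hγ, div_lt_one hp1]; linarith
  set α : ℝ := 1 / γ with hαdef
  have hα1 : 1 < α := one_lt_one_div hγ0 hγ1
  have hα0 : (0:ℝ) < α := by linarith
  set c : ℝ := (α - 1) * (p - 1) with hcdef
  have hc0 : 0 < c := mul_pos (by linarith) hp1
  have hαγ : α * γ = 1 := by rw [hαdef]; field_simp
  have hBα : B * α = c := by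
    have h1 : p - 1 - B ≠ 0 := by linarith
    rw [hcdef, hαdef, hγ]
    field_simp
    ring
  set φ : EuclideanSpace ℝ (Fin N) → ℝ := fun y => v y ^ α with hφdef
  have hV : 0 < v x := hpos x hx
  have hvΩ : ∀ y ∈ Ω, DifferentiableAt ℝ v y := fun y hy =>
    (hreg.contDiffAt (hΩ.mem_nhds hy)).differentiableAt two_ne_zero
  have hspos : ∀ y ∈ Ω, 0 < α * v y ^ (α - 1) := fun y hy =>
    mul_pos hα0 (Real.rpow_pos_of_pos (hpos y hy) _)
  have hφfd : ∀ y ∈ Ω, HasFDerivAt φ ((α * v y ^ (α - 1)) • fderiv ℝ v y) y := by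
    intro y hy
    have h1 : HasDerivAt (fun t : ℝ => t ^ α) (α * v y ^ (α - 1)) (v y) :=
      Real.hasDerivAt_rpow_const (Or.inl (hpos y hy).ne')
    exact h1.comp_hasFDerivAt y (hvΩ y hy).hasFDerivAt
  have hφgrad : ∀ y ∈ Ω, gradient φ y = (α * v y ^ (α - 1)) • gradient v y := by
    intro y hy
    have h := (hφfd y hy).fderiv
    simp only [gradient, h, map_smulₛₗ, starRingEnd_apply, star_trivial]
  -- pointwise identity for the inner functions of the p-Laplacian
  have hFi : ∀ i : Fin N, ∀ y ∈ Ω,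
      ‖gradient φ y‖ ^ (p - 2) * fderiv ℝ φ y (EuclideanSpace.single i (1:ℝ))
        = (α ^ (p-1) * v y ^ c) *
          (‖gradient v y‖ ^ (p-2) * fderiv ℝ v y (EuclideanSpace.single i (1:ℝ))) := by
    intro i y hy
    have hk : 0 < α * v y ^ (α - 1) := hspos y hy
    have hk1 : (α * v y ^ (α-1)) ^ (p-2) * (α * v y ^ (α-1)) = (α * v y ^ (α-1)) ^ (p-1) := by
      rw [← Real.rpow_add_one hk.ne' (p-2)]; congr 1; ring
    have hk2 : (α * v y ^ (α-1)) ^ (p-1) = α ^ (p-1) * v y ^ c := by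
      rw [Real.mul_rpow hα0.le (Real.rpow_pos_of_pos (hpos y hy) _).le,
        ← Real.rpow_mul (hpos y hy).le]
    rw [hφgrad y hy, (hφfd y hy).fderiv, norm_smul, Real.norm_eq_abs, abs_of_pos hk,
      ContinuousLinearMap.smul_apply, smul_eq_mul,
      Real.mul_rpow hk.le (norm_nonneg _), ← hk2, ← hk1]
    ring
  -- differentiability at x
  have hmem : Ω ∈ nhds x := hΩ.mem_nhds hx
  have hC2 : ContDiffAt ℝ 2 v x := hreg.contDiffAt hmem
  have hf1 : ContDiffAt ℝ 1 (fderiv ℝ v) x := hC2.fderiv_right (by norm_num)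
  have hgrad1 : ContDiffAt ℝ 1 (gradient v) x := by
    have h : gradient v = fun y => (toDual ℝ _).symm (fderiv ℝ v y) := rfl
    rw [h]; exact ((toDual ℝ _).symm.contDiff.contDiffAt).comp x hf1
  have hnd : DifferentiableAt ℝ (fun y => ‖gradient v y‖ ^ (p-2)) x :=
    ((hgrad1.differentiableAt one_ne_zero).norm ℝ (hgrad x hx)).rpow_const
      (Or.inl (norm_ne_zero_iff.mpr (hgrad x hx)))
  have hdi : ∀ i : Fin N,
      DifferentiableAt ℝ (fun y => fderiv ℝ v y (EuclideanSpace.single i (1:ℝ))) x := fun i =>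
    ((ContinuousLinearMap.apply ℝ ℝ (EuclideanSpace.single i (1:ℝ))).differentiable.differentiableAt).comp
      x (hf1.differentiableAt one_ne_zero)
  have hHdiff : ∀ i : Fin N, DifferentiableAt ℝ
      (fun y => ‖gradient v y‖ ^ (p-2) * fderiv ℝ v y (EuclideanSpace.single i (1:ℝ))) x :=
    fun i => hnd.mul (hdi i)
  have hA : HasFDerivAt (fun y => α^(p-1) * v y ^ c)
      ((α^(p-1) * (c * v x ^ (c - 1))) • fderiv ℝ v x) x := by
    have h1 : HasDerivAt (fun t : ℝ => t ^ c) (c * v x ^ (c-1)) (v x) :=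
      Real.hasDerivAt_rpow_const (Or.inl hV.ne')
    have h2 := h1.comp_hasFDerivAt x (hvΩ x hx).hasFDerivAt
    have h3 := h2.const_mul (α^(p-1))
    simpa [smul_smul] using h3
  have hsummand : ∀ i : Fin N,
      fderiv ℝ (fun y => ‖gradient φ y‖ ^ (p-2) * fderiv ℝ φ y (EuclideanSpace.single i (1:ℝ)))
          x (EuclideanSpace.single i (1:ℝ))
        = (α^(p-1) * v x ^ c) *
            fderiv ℝ (fun y => ‖gradient v y‖ ^ (p-2) * fderiv ℝ v y (EuclideanSpace.single i (1:ℝ)))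
              x (EuclideanSpace.single i (1:ℝ))
          + (‖gradient v x‖ ^ (p-2) * fderiv ℝ v x (EuclideanSpace.single i (1:ℝ)))
            * (α^(p-1) * (c * v x ^ (c-1)) * fderiv ℝ v x (EuclideanSpace.single i (1:ℝ))) := by
    intro i
    have hev : (fun y => ‖gradient φ y‖ ^ (p-2) * fderiv ℝ φ y (EuclideanSpace.single i (1:ℝ)))
        =ᶠ[nhds x] (fun y => (α^(p-1) * v y ^ c) *
          (‖gradient v y‖ ^ (p-2) * fderiv ℝ v y (EuclideanSpace.single i (1:ℝ)))) :=
      Filter.eventuallyEq_of_mem hmem (fun y hy => hFi i y hy)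
    rw [hev.fderiv_eq]
    have hG := hA.mul (hHdiff i).hasFDerivAt
    rw [show (fun y => α^(p-1) * v y ^ c * (‖gradient v y‖ ^ (p-2) * fderiv ℝ v y (EuclideanSpace.single i (1:ℝ)))) = (fun y => α^(p-1) * v y ^ c) * (fun y => ‖gradient v y‖ ^ (p-2) * fderiv ℝ v y (EuclideanSpace.single i (1:ℝ))) from rfl, hG.fderiv]
    simp only [ContinuousLinearMap.add_apply, ContinuousLinearMap.smul_apply, smul_eq_mul]
  -- the squared-gradient sum
  have hfg : (toDual ℝ (EuclideanSpace ℝ (Fin N))) (gradient v x) = fderiv ℝ v x :=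
    (toDual ℝ _).apply_symm_apply _
  have hns : ∑ i : Fin N, (fderiv ℝ v x (EuclideanSpace.single i (1:ℝ)))^2
      = ‖gradient v x‖^2 := by
    have h1 : ∀ i : Fin N, fderiv ℝ v x (EuclideanSpace.single i (1:ℝ)) = gradient v x i := by
      intro i
      rw [← hfg, toDual_apply_apply, EuclideanSpace.inner_single_right]
      simp
    simp_rw [h1]
    rw [← real_inner_self_eq_norm_sq]
    simp [PiLp.inner_apply, RCLike.inner_apply, sq]
    rw [EuclideanSpace.norm_eq, Real.mul_self_sqrt (by positivity)]; simp [sq, Real.norm_eq_abs]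
  have hw : 0 < ‖gradient v x‖ := norm_pos_iff.mpr (hgrad x hx)
  have hw2 : ‖gradient v x‖^(p-2) * ‖gradient v x‖^(2:ℕ) = ‖gradient v x‖^p := by
    rw [← Real.rpow_natCast ‖gradient v x‖ 2, ← Real.rpow_add hw]
    norm_num
  -- p-Laplacian of φ
  have hps : pLaplacian p φ x = α^(p-1) * v x ^ c * pLaplacian p v x
      + α^(p-1) * c * v x ^ (c-1) * ‖gradient v x‖^p := by
    simp only [pLaplacian]
    rw [Finset.sum_congr rfl (fun i _ => hsummand i), Finset.sum_add_distrib]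
    congr 1
    · rw [← Finset.mul_sum]
    · have h2 : ∀ i : Fin N,
        (‖gradient v x‖ ^ (p-2) * fderiv ℝ v x (EuclideanSpace.single i (1:ℝ)))
          * (α^(p-1) * (c * v x ^ (c-1)) * fderiv ℝ v x (EuclideanSpace.single i (1:ℝ)))
        = (α^(p-1) * c * v x ^ (c-1) * ‖gradient v x‖ ^ (p-2))
            * (fderiv ℝ v x (EuclideanSpace.single i (1:ℝ)))^2 := fun i => by ring
      rw [Finset.sum_congr rfl (fun i _ => h2 i), ← Finset.mul_sum, hns, mul_assoc, hw2]
  -- norm of gradient of φ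
  have hk := hspos x hx
  have hnφ : ‖gradient φ x‖^p = α^p * v x ^((α-1)*p) * ‖gradient v x‖^p := by
    rw [hφgrad x hx, norm_smul, Real.norm_eq_abs, abs_of_pos hk,
      Real.mul_rpow hk.le (norm_nonneg _),
      Real.mul_rpow hα0.le (Real.rpow_pos_of_pos hV _).le, ← Real.rpow_mul hV.le]
  have hVα : (0:ℝ) < v x ^ α := Real.rpow_pos_of_pos hV α
  have h2 : B * α^p = α^(p-1) * c := by
    have h3 : α^p = α^(p-1) * α := by rw [← Real.rpow_add_one hα0.ne' (p-1)]; congr 1; ring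
    rw [h3, ← hBα]; ring
  have hcancel : B * (α^p * v x ^((α-1)*p) * ‖gradient v x‖^p) / v x ^ α
      = α^(p-1) * c * v x ^ (c-1) * ‖gradient v x‖^p := by
    have h1 : v x ^ ((α-1)*p) = v x ^ (c-1) * v x ^ α := by
      rw [← Real.rpow_add hV]; congr 1; rw [hcdef]; ring
    rw [h1]
    rw [div_eq_iff hVα.ne']
    linear_combination (v x ^ (c-1) * v x ^ α * ‖gradient v x‖^p) * h2
  have hfinal : α^(p-1) * v x ^ c * (γ^(p-1) * v x ^ (((γ-1)*(p-1)+1)/γ)) = v x ^ α := by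
    have h1 : α^(p-1) * γ^(p-1) = 1 := by
      rw [← Real.mul_rpow hα0.le hγ0.le, hαγ, Real.one_rpow]
    have h4 : v x ^ c * v x ^ (((γ-1)*(p-1)+1)/γ) = v x ^ α := by
      rw [← Real.rpow_add hV]; congr 1
      rw [hcdef, hαdef]; field_simp; ring
    calc α^(p-1) * v x ^ c * (γ^(p-1) * v x ^ (((γ-1)*(p-1)+1)/γ))
        = (α^(p-1) * γ^(p-1)) * (v x ^ c * v x ^ (((γ-1)*(p-1)+1)/γ)) := by ring
      _ = v x ^ α := by rw [h1, h4, one_mul]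
  have hD := hpde x hx
  rw [hps, hnφ, hcancel]
  linear_combination (α^(p-1) * v x ^ c) * hD + hfinal
end
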